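/- arXiv:2005.09557 — 2 statements merged into one kernel-verified Lean document; each statement's English description precedes it below -/
import Mathlib

section
/- Let $X$ be a separable complex Banach space and $T$ a bounded linear operator on $X$. If the linear span of $\bigcup_{|\lambda|<1} \ker(T - \lambda I)$ is dense in $X$ and the linear span of $\bigcup_{|\lambda|>1} \ker(T - \lambda I)$ is dense in $X$, then $T$ is hypercyclic (Godefroy–Shapiro criterion). -/
open Filter Topology

/-- An operator `T` is hypercyclic if some orbit `{T^n x : n ≥ 0}` is dense. -/
def Hypercyclic {X : Type*} [NormedAddCommGroup X] [NormedSpace ℂ X]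
    (T : X →L[ℂ] X) : Prop :=
  ∃ x : X, Dense (Set.range fun n : ℕ => (T ^ n) x)

private lemma pow_apply_eigen {X : Type*} [NormedAddCommGroup X] [NormedSpace ℂ X]
    (T : X →L[ℂ] X) (μ : ℂ) (y : X) (h : T y = μ • y) (n : ℕ) :
    (T ^ n) y = μ ^ n • y := by
  induction n with
  | zero => simp
  | succ n ih => rw [pow_succ, pow_succ, ContinuousLinearMap.mul_apply, h, map_smul, ih,
      smul_smul, mul_comm]

private lemma eigen_of_mem_ker {X : Type*} [NormedAddCommGroup X] [NormedSpace ℂ X]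
    (T : X →L[ℂ] X) (μ : ℂ) (y : X)
    (h : y ∈ LinearMap.ker ((T - μ • (1 : X →L[ℂ] X) : X →L[ℂ] X) : X →ₗ[ℂ] X)) : T y = μ • y := by
  rw [LinearMap.mem_ker] at h
  simpa [sub_eq_zero] using h

/-- Godefroy–Shapiro criterion: if the eigenvectors of `T` corresponding to eigenvalues
of modulus `< 1` span a dense subspace, and likewise for eigenvalues of modulus `> 1`,
then `T` is hypercyclic. -/
theorem stmt1 {X : Type*} [NormedAddCommGroup X] [NormedSpace ℂ X]
    [CompleteSpace X] [TopologicalSpace.SeparableSpace X]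
    (T : X →L[ℂ] X)
    (h1 : Dense (↑(Submodule.span ℂ (⋃ (μ : ℂ) (_ : ‖μ‖ < 1),
      (LinearMap.ker ((T - μ • (1 : X →L[ℂ] X) : X →L[ℂ] X) : X →ₗ[ℂ] X) : Set X))) : Set X))
    (h2 : Dense (↑(Submodule.span ℂ (⋃ (μ : ℂ) (_ : ‖μ‖ > 1),
      (LinearMap.ker ((T - μ • (1 : X →L[ℂ] X) : X →L[ℂ] X) : X →ₗ[ℂ] X) : Set X))) : Set X)) :
    Hypercyclic T := by
  classical
  -- P: points whose orbit tends to 0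
  set P : Set X := {y | Tendsto (fun n : ℕ => (T ^ n) y) atTop (𝓝 0)} with hPdef
  have hPdense : Dense P := by
    refine h1.mono ?_
    rintro y hy
    refine Submodule.span_induction ?_ ?_ ?_ ?_ hy
    · intro z hz
      simp only [Set.mem_iUnion] at hz
      obtain ⟨μ, hμ, hzk⟩ := hz
      have hz' : T z = μ • z := eigen_of_mem_ker T μ z hzk
      have : Tendsto (fun n : ℕ => μ ^ n • z) atTop (𝓝 ((0 : ℂ) • z)) :=
        (tendsto_pow_atTop_nhds_zero_of_norm_lt_one hμ).smul_const z
      simp only [zero_smul] at this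
      simpa only [hPdef, Set.mem_setOf_eq, pow_apply_eigen T μ z hz'] using this
    · simp [hPdef, tendsto_const_nhds]
    · intro a b _ _ ha hb
      have := ha.add hb
      simpa [hPdef, map_add] using this
    · intro c a _ ha
      have := ha.const_smul c
      simpa only [hPdef, Set.mem_setOf_eq, map_smul, smul_zero] using this
  -- Q: points approachable as T^n (u n) with u n → 0
  set Q : Set X := {z | ∃ u : ℕ → X, Tendsto u atTop (𝓝 0) ∧
      Tendsto (fun n : ℕ => (T ^ n) (u n)) atTop (𝓝 z)} with hQdef
  have hQdense : Dense Q := by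
    refine h2.mono ?_
    rintro z hz
    refine Submodule.span_induction ?_ ?_ ?_ ?_ hz
    · intro z hz
      simp only [Set.mem_iUnion] at hz
      obtain ⟨μ, hμ, hzk⟩ := hz
      have hz' : T z = μ • z := eigen_of_mem_ker T μ z hzk
      have hμ0 : μ ≠ 0 := by
        intro h; rw [h] at hμ; simp at hμ; linarith
      refine ⟨fun n => (μ⁻¹) ^ n • z, ?_, ?_⟩
      · have hμi : ‖μ⁻¹‖ < 1 := by
          rw [norm_inv]
          rw [inv_lt_one_iff₀]
          right; exact hμ
        have : Tendsto (fun n : ℕ => (μ⁻¹) ^ n • z) atTop (𝓝 ((0 : ℂ) • z)) :=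
          (tendsto_pow_atTop_nhds_zero_of_norm_lt_one hμi).smul_const z
        simpa only [zero_smul] using this
      · have : ∀ n : ℕ, (T ^ n) ((μ⁻¹) ^ n • z) = z := by
          intro n
          rw [map_smul, pow_apply_eigen T μ z hz', smul_smul, ← mul_pow,
            inv_mul_cancel₀ hμ0, one_pow, one_smul]
        simp only [this]
        exact tendsto_const_nhds
    · exact ⟨fun _ => 0, by simpa using tendsto_const_nhds, by simpa using tendsto_const_nhds⟩
    · rintro a b _ _ ⟨u, hu0, hua⟩ ⟨v, hv0, hvb⟩
      refine ⟨u + v, ?_, ?_⟩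
      · have h := hu0.add hv0; rw [add_zero] at h; exact h
      · have := hua.add hvb
        simpa [map_add] using this
    · rintro c a _ ⟨u, hu0, hua⟩
      refine ⟨c • u, ?_, ?_⟩
      · have h := hu0.const_smul c; rw [smul_zero] at h; exact h
      · have := hua.const_smul c
        simpa [map_smul] using this
  -- transitivity
  have trans : ∀ U V : Set X, IsOpen U → IsOpen V → U.Nonempty → V.Nonempty →
      ∃ n : ℕ, ∃ x ∈ U, (T ^ n) x ∈ V := by
    intro U V hU hV hUne hVne
    obtain ⟨y, hyP, hyU⟩ := hPdense.exists_mem_open hU hUne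
    obtain ⟨z, hzQ, hzV⟩ := hQdense.exists_mem_open hV hVne
    obtain ⟨u, hu0, huz⟩ := hzQ
    have h1' : Tendsto (fun n : ℕ => y + u n) atTop (𝓝 y) := by
      simpa using (tendsto_const_nhds (x := y) (f := atTop)).add hu0
    have h2' : Tendsto (fun n : ℕ => (T ^ n) (y + u n)) atTop (𝓝 z) := by
      have : Tendsto (fun n : ℕ => (T ^ n) y + (T ^ n) (u n)) atTop (𝓝 (0 + z)) :=
        hyP.add huz
      simpa [map_add] using this
    have e1 : ∀ᶠ n in atTop, y + u n ∈ U := h1' (hU.mem_nhds hyU)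
    have e2 : ∀ᶠ n in atTop, (T ^ n) (y + u n) ∈ V := h2' (hV.mem_nhds hzV)
    obtain ⟨n, hn1, hn2⟩ := (e1.and e2).exists
    exact ⟨n, y + u n, hn1, hn2⟩
  -- Baire category argument
  obtain ⟨B, hBc, hBne, hB⟩ := TopologicalSpace.exists_countable_basis X
  have hGopen : ∀ V ∈ B, IsOpen (⋃ n : ℕ, (fun x => (T ^ n) x) ⁻¹' V) := by
    intro V hV
    exact isOpen_iUnion fun n => (hB.isOpen hV).preimage (T ^ n).continuous
  have hGdense : ∀ V ∈ B, Dense (⋃ n : ℕ, (fun x => (T ^ n) x) ⁻¹' V) := by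
    intro V hV
    rw [dense_iff_inter_open]
    intro U hU hUne
    have hVne : V.Nonempty := Set.nonempty_iff_ne_empty.2 fun h => hBne (h ▸ hV)
    obtain ⟨n, x, hxU, hxV⟩ := trans U V hU (hB.isOpen hV) hUne hVne
    exact ⟨x, Set.mem_inter hxU (Set.mem_iUnion.2 ⟨n, hxV⟩)⟩
  have hG : Dense (⋂ V ∈ B, ⋃ n : ℕ, (fun x => (T ^ n) x) ⁻¹' V) :=
    dense_biInter_of_isOpen hGopen hBc hGdense
  obtain ⟨x, hx⟩ := hG.nonempty
  refine ⟨x, ?_⟩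
  rw [hB.dense_iff]
  intro o ho hone
  simp only [Set.mem_iInter] at hx
  obtain ⟨n, hn⟩ := Set.mem_iUnion.1 (hx o ho)
  exact ⟨(T ^ n) x, hn, Set.mem_range_self n⟩
end

section
/- For $\alpha \in \mathbb{C}$ with $|\alpha| > 1$, the operator $\alpha S^*$ on $\ell^2(\mathbb{N})$, where $S^*$ is the backward shift $(a_0, a_1, a_2, \dots) \mapsto (a_1, a_2, a_3, \dots)$, is hypercyclic (Rolewicz's theorem). -/
open Set Function

noncomputable section

namespace RolewiczAux

local notation "X" => lp (fun _ : ℕ => ℂ) 2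

lemma two_toReal : ((2 : ENNReal)).toReal = 2 := by norm_num

/-- the forward-shift-by-n of `c • y` as a raw function -/
def shiftFun (n : ℕ) (c : ℂ) (y : X) : ℕ → ℂ :=
  fun k => if k < n then 0 else c * y (k - n)

lemma shiftFun_add (n : ℕ) (c : ℂ) (y : X) (k : ℕ) :
    shiftFun n c y (k + n) = c * y k := by
  simp [shiftFun, Nat.add_sub_cancel]

lemma shiftFun_memℓp (n : ℕ) (c : ℂ) (y : X) : Memℓp (shiftFun n c y) 2 := by
  apply memℓp_gen
  rw [two_toReal]
  have hsum : Summable (fun k : ℕ => ‖(c • y : X) k‖ ^ (2:ℝ)) := by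
    have := lp.memℓp (c • y : X)
    exact (this.summable (by rw [two_toReal]; norm_num)).congr (by
      intro k; rw [two_toReal])
  have hinj : Function.Injective (fun k : ℕ => k + n) := add_left_injective n
  have h0 : ∀ x ∉ Set.range (fun k : ℕ => k + n),
      (fun k => ‖shiftFun n c y k‖ ^ (2:ℝ)) x = 0 := by
    intro x hx
    have hxn : x < n := by
      by_contra h
      exact hx ⟨x - n, by show x - n + n = x; omega⟩
    simp [shiftFun, hxn]
  rw [← hinj.summable_iff h0]
  refine hsum.congr fun k => ?_
  simp only [Function.comp, shiftFun_add]
  rw [lp.coeFn_smul, Pi.smul_apply, smul_eq_mul]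

def shiftlp (n : ℕ) (c : ℂ) (y : X) : X := ⟨shiftFun n c y, shiftFun_memℓp n c y⟩

lemma shiftlp_norm (n : ℕ) (c : ℂ) (y : X) : ‖shiftlp n c y‖ = ‖c‖ * ‖y‖ := by
  have h2 : (0:ℝ) < ((2 : ENNReal)).toReal := by rw [two_toReal]; norm_num
  rw [← norm_smul c y, lp.norm_eq_tsum_rpow h2, lp.norm_eq_tsum_rpow h2]
  congr 1
  have hinj : Function.Injective (fun k : ℕ => k + n) := add_left_injective n
  have hsupp : Function.support (fun k => ‖(shiftlp n c y) k‖ ^ ((2:ENNReal)).toReal)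
      ⊆ Set.range (fun k : ℕ => k + n) := by
    intro x hx
    by_contra h
    have hxn : x < n := by
      rcases Nat.lt_or_ge x n with h' | h'
      · exact h'
      · exact absurd ⟨x - n, by show x - n + n = x; omega⟩ h
    apply hx
    show ‖(shiftlp n c y) x‖ ^ ((2:ENNReal)).toReal = 0
    have : (shiftlp n c y) x = 0 := by simp [shiftlp, shiftFun, hxn]
    rw [this]
    simp [two_toReal]
  rw [← hinj.tsum_eq hsupp]
  refine tsum_congr fun k => ?_
  have : (shiftlp n c y) (k + n) = c * y k := shiftFun_add n c y k
  rw [this, lp.coeFn_smul, Pi.smul_apply, smul_eq_mul]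

lemma pow_apply (α : ℂ) (T : X →L[ℂ] X)
    (hT : ∀ a : X, ∀ n : ℕ, (T a) n = α * a (n + 1)) :
    ∀ (n : ℕ) (a : X) (k : ℕ), ((T ^ n) a) k = α ^ n * a (k + n) := by
  intro n
  induction n with
  | zero => intro a k; simp
  | succ n ih =>
    intro a k
    have h1 : (T ^ (n + 1)) a = (T ^ n) (T a) := by
      rw [pow_succ, ContinuousLinearMap.mul_apply]
    rw [h1, ih (T a) k, hT a (k + n)]
    ring_nf

instance : TopologicalSpace.SeparableSpace X := by
  have key : Dense ((Submodule.span ℂ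
      (Set.range fun i : ℕ => lp.single 2 i (1 : ℂ)) : Submodule ℂ X) : Set X) := by
    intro f
    have hs := lp.hasSum_single (p := 2) (E := fun _ : ℕ => ℂ) (by norm_num) f
    have htend : Filter.Tendsto (fun s : Finset ℕ => ∑ i ∈ s, lp.single 2 i (f i))
        Filter.atTop (nhds f) := hs
    refine mem_closure_of_tendsto htend ?_
    filter_upwards with s
    refine Submodule.sum_mem _ fun i _ => ?_
    have heq : lp.single 2 i (f i) = (f i : ℂ) • (lp.single 2 i (1 : ℂ) : X) := by
      rw [← lp.single_smul]
      norm_num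
    rw [heq]
    exact Submodule.smul_mem _ _ (Submodule.subset_span ⟨i, rfl⟩)
  have hsep : TopologicalSpace.IsSeparable ((Submodule.span ℂ
      (Set.range fun i : ℕ => lp.single 2 i (1 : ℂ)) : Submodule ℂ X) : Set X) :=
    ((Set.countable_range _).isSeparable).span
  have : TopologicalSpace.IsSeparable (Set.univ : Set X) := by
    rw [← key.closure_eq]
    exact hsep.closure
  exact (TopologicalSpace.isSeparable_univ_iff).1 this

lemma transitive (α : ℂ) (hα : 1 < ‖α‖) (T : X →L[ℂ] X)
    (hT : ∀ a : X, ∀ n : ℕ, (T a) n = α * a (n + 1)) :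
    ∀ U V : Set X, IsOpen U → IsOpen V → U.Nonempty → V.Nonempty →
      ∃ n : ℕ, (U ∩ (T ^ n) ⁻¹' V).Nonempty := by
  intro U V hU hV ⟨x', hx'⟩ ⟨y', hy'⟩
  have hα0 : (α : ℂ) ≠ 0 := by
    intro h
    rw [h, norm_zero] at hα
    linarith
  obtain ⟨ε, hε, hball⟩ := Metric.isOpen_iff.1 hU x' hx'
  -- a finitely supported approximation to x'
  have hs := lp.hasSum_single (p := 2) (E := fun _ : ℕ => ℂ) (by norm_num) x'
  have htend : Filter.Tendsto (fun s : Finset ℕ => ∑ i ∈ s, lp.single 2 i (x' i))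
      Filter.atTop (nhds x') := hs
  have : ∀ᶠ s : Finset ℕ in Filter.atTop,
      dist (∑ i ∈ s, lp.single 2 i (x' i)) x' < ε / 2 :=
    htend (Metric.ball_mem_nhds x' (by linarith))
  obtain ⟨s, hsd⟩ := this.exists
  set x : X := ∑ i ∈ s, lp.single 2 i (x' i) with hxdef
  have hxcoord : ∀ k : ℕ, k ∉ s → x k = 0 := by
    intro k hk
    simp only [hxdef, lp.coeFn_sum, Finset.sum_apply, lp.single_apply,
      Finset.sum_dite_eq, if_neg hk]
    simp [Pi.single_apply, hk]
  set m : ℕ := (s.sup id) + 1 with hmdef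
  have hms : ∀ j ∈ s, j < m := by
    intro j hj
    have : j ≤ s.sup id := Finset.le_sup (f := id) hj
    omega
  -- choose exponent
  have hinv : ‖α‖⁻¹ < 1 := by
    rw [inv_lt_one_iff₀]; right; exact hα
  have hinv0 : (0:ℝ) ≤ ‖α‖⁻¹ := by positivity
  have hy'pos : (0:ℝ) < ε / 2 / (‖y'‖ + 1) := by
    apply div_pos (by linarith)
    have := norm_nonneg y'
    linarith
  obtain ⟨n₀, hn₀⟩ := exists_pow_lt_of_lt_one hy'pos hinv
  set N : ℕ := max n₀ m with hNdef
  have hNn₀ : ‖α‖⁻¹ ^ N ≤ ‖α‖⁻¹ ^ n₀ :=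
    pow_le_pow_of_le_one hinv0 (le_of_lt hinv) (le_max_left _ _)
  set c : ℂ := (α ^ N)⁻¹ with hcdef
  have hcnorm : ‖c‖ = ‖α‖⁻¹ ^ N := by
    rw [hcdef, norm_inv, norm_pow, inv_pow]
  set w : X := shiftlp N c y' with hwdef
  have hwnorm : ‖w‖ < ε / 2 := by
    rw [hwdef, shiftlp_norm, hcnorm]
    calc ‖α‖⁻¹ ^ N * ‖y'‖ ≤ ‖α‖⁻¹ ^ n₀ * ‖y'‖ := by
          apply mul_le_mul_of_nonneg_right hNn₀ (norm_nonneg _)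
      _ ≤ ‖α‖⁻¹ ^ n₀ * (‖y'‖ + 1) := by
          apply mul_le_mul_of_nonneg_left (by linarith) (by positivity)
      _ < ε / 2 / (‖y'‖ + 1) * (‖y'‖ + 1) := by
          apply mul_lt_mul_of_pos_right hn₀
          have := norm_nonneg y'
          linarith
      _ = ε / 2 := by
          field_simp
  refine ⟨N, x + w, ?_, ?_⟩
  · apply hball
    rw [Metric.mem_ball, dist_eq_norm]
    have : x + w - x' = (x - x') + w := by abel
    rw [this]
    calc ‖(x - x') + w‖ ≤ ‖x - x'‖ + ‖w‖ := norm_add_le _ _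
      _ < ε / 2 + ε / 2 := by
          apply add_lt_add _ hwnorm
          rw [← dist_eq_norm]
          exact hsd
      _ = ε := by ring
  · show (T ^ N) (x + w) ∈ V
    have hTN : (T ^ N) (x + w) = y' := by
      apply lp.ext
      funext k
      rw [pow_apply α T hT N (x + w) k]
      have hco : ((x + w : X) : ℕ → ℂ) (k + N) = x (k + N) + w (k + N) := by
        rw [lp.coeFn_add, Pi.add_apply]
      rw [hco]
      have hx0 : x (k + N) = 0 := by
        apply hxcoord
        intro hmem
        have h1 := hms _ hmem
        have h2 : m ≤ N := le_max_right _ _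
        omega
      have hw0 : w (k + N) = c * y' k := shiftFun_add N c y' k
      rw [hx0, hw0, zero_add, hcdef]
      field_simp
    rw [hTN]
    exact hy'

end RolewiczAux

end

/-- Rolewicz's theorem: for `|α| > 1`, the multiple `α S*` of the backward shift
on `ℓ²(ℕ)` is hypercyclic. -/
theorem stmt2 (α : ℂ) (hα : 1 < ‖α‖)
    (T : lp (fun _ : ℕ => ℂ) 2 →L[ℂ] lp (fun _ : ℕ => ℂ) 2)
    (hT : ∀ a : lp (fun _ : ℕ => ℂ) 2, ∀ n : ℕ, (T a) n = α * a (n + 1)) :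
    Hypercyclic T := by
  classical
  haveI : SecondCountableTopology (lp (fun _ : ℕ => ℂ) 2) :=
    UniformSpace.secondCountable_of_separable _
  obtain ⟨b, hbc, hbne, hbasis⟩ :=
    TopologicalSpace.exists_countable_basis (lp (fun _ : ℕ => ℂ) 2)
  haveI : Countable b := hbc.to_subtype
  have htrans := RolewiczAux.transitive α hα T hT
  -- each set ⋃ n, (T^n)⁻¹ o is open and dense
  have hopen : ∀ o : b, IsOpen (⋃ n : ℕ, (T ^ n) ⁻¹' o.1) := by
    intro o
    exact isOpen_iUnion fun n =>
      (hbasis.isOpen o.2).preimage (T ^ n).continuous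
  have hdense : ∀ o : b, Dense (⋃ n : ℕ, (T ^ n) ⁻¹' o.1) := by
    intro o
    rw [dense_iff_inter_open]
    intro U hU hUne
    have honempty : o.1.Nonempty := by
      rcases Set.eq_empty_or_nonempty o.1 with h | h
      · exact absurd (h ▸ o.2) hbne
      · exact h
    obtain ⟨n, z, hzU, hzV⟩ := htrans U o.1 hU (hbasis.isOpen o.2) hUne honempty
    exact ⟨z, hzU, Set.mem_iUnion.2 ⟨n, hzV⟩⟩
  have hG : Dense (⋂ o : b, ⋃ n : ℕ, (T ^ n) ⁻¹' o.1) :=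
    dense_iInter_of_isOpen hopen hdense
  obtain ⟨x, hx⟩ := hG.nonempty
  refine ⟨x, ?_⟩
  rw [hbasis.dense_iff]
  intro o ho hone
  have := Set.mem_iInter.1 hx ⟨o, ho⟩
  obtain ⟨n, hn⟩ := Set.mem_iUnion.1 this
  exact ⟨(T ^ n) x, hn, ⟨n, rfl⟩⟩
end
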